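/- Let P and Q be mutually absolutely continuous probability measures with P ≠ Q, β₁ = (ess sup dP/dQ)⁻¹ ∈ (0,1) and β₂ = ess inf dP/dQ ∈ (0,1). With κ(t) = (t·ln t + 1 − t)/((t−1) − ln t) for t ∈ (0,1)∪(1,∞), we have κ(β₂) ≤ D(P‖Q)/D(Q‖P) ≤ κ(1/β₁). -/

import Mathlib

open MeasureTheory Set

open Set

private lemma RB_lt_sub_one {s : ℝ} (hs0 : 0 < s) (hs1 : s ≠ 1) :
    0 < s - 1 - Real.log s := by
  have := Real.log_lt_sub_one_of_pos hs0 hs1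
  linarith

private lemma RB_one_sub_inv_lt {s : ℝ} (hs0 : 0 < s) (hs1 : s ≠ 1) :
    1 - 1/s < Real.log s := by
  have h := Real.log_lt_sub_one_of_pos (x := 1/s) (by positivity) (by
    rw [ne_eq, div_eq_one_iff_eq hs0.ne']
    exact fun h => hs1 h.symm)
  rw [Real.log_div one_ne_zero hs0.ne', Real.log_one] at h
  linarith

private lemma RB_phi {s : ℝ} (hs : 1 < s) : 2*(s-1) < (s+1) * Real.log s := by
  set f : ℝ → ℝ := fun x => (x+1) * Real.log x - 2*(x-1) with hf
  have hd : ∀ x : ℝ, 0 < x → HasDerivAt f (Real.log x + (x+1)/x - 2) x := by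
    intro x hx
    have h1 : HasDerivAt (fun x : ℝ => (x+1) * Real.log x)
        (1 * Real.log x + (x+1) * x⁻¹) x :=
      ((hasDerivAt_id x).add_const 1).mul (Real.hasDerivAt_log hx.ne')
    have := (h1.sub (((hasDerivAt_id x).sub_const 1).const_mul 2))
    refine this.congr_deriv ?_
    rw [div_eq_mul_inv]; ring
  have hmono : StrictMonoOn f (Ici 1) := by
    apply strictMonoOn_of_deriv_pos (convex_Ici 1)
    · intro x hx
      exact ((hd x (lt_of_lt_of_le one_pos hx)).continuousAt).continuousWithinAt
    · intro x hx
      rw [interior_Ici] at hx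
      have hx1 : (1:ℝ) < x := hx
      have hx0 : (0:ℝ) < x := lt_trans one_pos hx1
      rw [(hd x hx0).deriv]
      have := RB_one_sub_inv_lt hx0 hx1.ne'
      have hxx : (x+1)/x = 1 + 1/x := by field_simp
      rw [hxx]
      linarith
  have := hmono (self_mem_Ici) (mem_Ici.mpr hs.le) hs
  simp only [hf, Real.log_one] at this
  nlinarith [this]

private lemma RB_psi {s : ℝ} (hs : 1 < s) : 2*s*Real.log s < s^2 - 1 := by
  set f : ℝ → ℝ := fun x => x^2 - 1 - 2*x*Real.log x with hf
  have hd : ∀ x : ℝ, 0 < x → HasDerivAt f (2*x - 2*Real.log x - 2) x := by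
    intro x hx
    have h1 : HasDerivAt (fun x : ℝ => x^2) (2*x) x := by
      simpa using hasDerivAt_pow 2 x
    have h2 : HasDerivAt (fun x : ℝ => 2*x*Real.log x)
        (2 * Real.log x + 2*x*x⁻¹) x := by
      have := ((hasDerivAt_id x).const_mul 2).mul (Real.hasDerivAt_log hx.ne')
      refine this.congr_deriv ?_
      simp only [id_eq]
      ring
    have := (h1.sub_const 1).sub h2
    refine this.congr_deriv ?_
    rw [mul_inv_cancel_right₀ hx.ne']; ring
  have hmono : StrictMonoOn f (Ici 1) := by
    apply strictMonoOn_of_deriv_pos (convex_Ici 1)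
    · intro x hx
      exact ((hd x (lt_of_lt_of_le one_pos hx)).continuousAt).continuousWithinAt
    · intro x hx
      rw [interior_Ici] at hx
      have hx1 : (1:ℝ) < x := hx
      have hx0 : (0:ℝ) < x := lt_trans one_pos hx1
      rw [(hd x hx0).deriv]
      have := Real.log_lt_sub_one_of_pos hx0 hx1.ne'
      linarith
  have := hmono (self_mem_Ici) (mem_Ici.mpr hs.le) hs
  simp only [hf, Real.log_one] at this
  nlinarith [this]

private lemma RB_aux {A B s : ℝ} (hA : 0 < A) (hB : 0 < B) (hBA : B < A)
    (hAs : A < s*B) (hs : 1 < s)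
    (hFs : A*(s - 1 - Real.log s) - B*(s*Real.log s + 1 - s) = 0) :
    ∀ t, 0 < t → t ≤ s → 0 ≤ A*(t - 1 - Real.log t) - B*(t*Real.log t + 1 - t) := by
  set F : ℝ → ℝ := fun t => A*(t - 1 - Real.log t) - B*(t*Real.log t + 1 - t) with hF
  set F' : ℝ → ℝ := fun t => A*(1 - 1/t) - B*Real.log t with hF'
  have hc1 : 1 < A/B := (one_lt_div hB).mpr hBA
  have hcs : A/B < s := (div_lt_iff₀ hB).mpr (by linarith)
  have hc0 : 0 < A/B := by positivity
  have hFd : ∀ x : ℝ, 0 < x → HasDerivAt F (F' x) x := by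
    intro x hx
    have h1 : HasDerivAt (fun t : ℝ => t - 1 - Real.log t) (1 - x⁻¹) x :=
      ((hasDerivAt_id x).sub_const 1).sub (Real.hasDerivAt_log hx.ne')
    have h2 : HasDerivAt (fun t : ℝ => t*Real.log t + 1 - t) (Real.log x) x := by
      have := (((hasDerivAt_id x).mul (Real.hasDerivAt_log hx.ne')).add_const 1).sub
        (hasDerivAt_id x)
      simp [mul_inv_cancel₀ hx.ne'] at this
      exact this
    have := (h1.const_mul A).sub (h2.const_mul B)
    have heq : F' x = A * (1 - x⁻¹) - B * Real.log x := by rw [hF']; norm_num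
    rw [heq]
    exact this
  have hF'd : ∀ x : ℝ, 0 < x → HasDerivAt F' (A/x^2 - B/x) x := by
    intro x hx
    have h1 : HasDerivAt (fun t : ℝ => 1 - 1/t) (x^2)⁻¹ x := by
      have := ((hasDerivAt_inv hx.ne').const_sub 1)
      simpa [one_div] using this
    have := (h1.const_mul A).sub ((Real.hasDerivAt_log hx.ne').const_mul B)
    have heq : A/x^2 - B/x = A*(x^2)⁻¹ - B*x⁻¹ := by
      rw [div_eq_mul_inv, div_eq_mul_inv]
    rw [heq]
    exact this
  have hF'deriv : ∀ x : ℝ, 0 < x → deriv F' x = A/x^2 - B/x := fun x hx => (hF'd x hx).deriv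
  have hFderiv : ∀ x : ℝ, 0 < x → deriv F x = F' x := fun x hx => (hFd x hx).deriv
  -- monotonicity of F' on (0, A/B]
  have hmonoF' : MonotoneOn F' (Ioc 0 (A/B)) := by
    apply monotoneOn_of_deriv_nonneg (convex_Ioc 0 (A/B))
    · exact fun x hx => ((hF'd x hx.1).continuousAt).continuousWithinAt
    · intro x hx
      rw [interior_Ioc] at hx
      exact ((hF'd x hx.1).differentiableAt).differentiableWithinAt
    · intro x hx
      rw [interior_Ioc] at hx
      rw [hF'deriv x hx.1]
      have hxc : B * x < A := by
        have := hx.2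
        rw [lt_div_iff₀ hB] at this
        linarith
      have hx0' : x ≠ 0 := ne_of_gt hx.1
      have : A/x^2 - B/x = (A - B*x)/x^2 := by field_simp
      rw [this]
      have h4 : 0 ≤ A - B*x := by linarith
      positivity
  have hF'1 : F' 1 = 0 := by simp [hF']
  have h1mem : (1:ℝ) ∈ Ioc (0:ℝ) (A/B) := ⟨one_pos, hc1.le⟩
  have hF'le : ∀ t ∈ Ioc (0:ℝ) 1, F' t ≤ 0 := by
    intro t ht
    have := hmonoF' ⟨ht.1, ht.2.trans hc1.le⟩ h1mem ht.2
    rwa [hF'1] at this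
  have hF'ge : ∀ t ∈ Icc (1:ℝ) (A/B), 0 ≤ F' t := by
    intro t ht
    have := hmonoF' h1mem ⟨lt_of_lt_of_le one_pos ht.1, ht.2⟩ ht.1
    rwa [hF'1] at this
  have hF1 : F 1 = 0 := by simp [hF]
  -- F ≥ 0 on (0,1]
  have hFanti : AntitoneOn F (Ioc 0 1) := by
    apply antitoneOn_of_deriv_nonpos (convex_Ioc 0 1)
    · exact fun x hx => ((hFd x hx.1).continuousAt).continuousWithinAt
    · intro x hx
      rw [interior_Ioc] at hx
      exact ((hFd x hx.1).differentiableAt).differentiableWithinAt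
    · intro x hx
      rw [interior_Ioc] at hx
      rw [hFderiv x hx.1]
      exact hF'le x ⟨hx.1, hx.2.le⟩
  have hFmono : MonotoneOn F (Icc 1 (A/B)) := by
    apply monotoneOn_of_deriv_nonneg (convex_Icc 1 (A/B))
    · exact fun x hx => ((hFd x (lt_of_lt_of_le one_pos hx.1)).continuousAt).continuousWithinAt
    · intro x hx
      rw [interior_Icc] at hx
      exact ((hFd x (lt_of_lt_of_le one_pos hx.1.le)).differentiableAt).differentiableWithinAt
    · intro x hx
      rw [interior_Icc] at hx
      rw [hFderiv x (lt_of_lt_of_le one_pos hx.1.le)]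
      exact hF'ge x ⟨hx.1.le, hx.2.le⟩
  have hFc : 0 ≤ F (A/B) := by
    have := hFmono (left_mem_Icc.mpr hc1.le) (right_mem_Icc.mpr hc1.le) hc1.le
    rwa [hF1] at this
  -- antitone F' on [A/B, s]
  have hF'anti : AntitoneOn F' (Icc (A/B) s) := by
    apply antitoneOn_of_deriv_nonpos (convex_Icc (A/B) s)
    · exact fun x hx => ((hF'd x (lt_of_lt_of_le hc0 hx.1)).continuousAt).continuousWithinAt
    · intro x hx
      rw [interior_Icc] at hx
      exact ((hF'd x (lt_of_lt_of_le hc0 hx.1.le)).differentiableAt).differentiableWithinAt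
    · intro x hx
      rw [interior_Icc] at hx
      have hx0 : 0 < x := lt_of_lt_of_le hc0 hx.1.le
      rw [hF'deriv x hx0]
      have hxc : A < B * x := by
        have := hx.1
        rw [div_lt_iff₀ hB] at this
        linarith
      have hx0' : x ≠ 0 := ne_of_gt hx0
      have heq : A/x^2 - B/x = (A - B*x)/x^2 := by field_simp
      rw [heq, div_nonpos_iff]
      right
      exact ⟨by linarith, by positivity⟩
  intro t ht0 hts
  show 0 ≤ F t
  rcases le_or_gt t 1 with h1 | h1
  · have := hFanti ⟨ht0, h1⟩ ⟨one_pos, le_refl 1⟩ h1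
    rw [hF1] at this
    exact this
  rcases le_or_gt t (A/B) with h2 | h2
  · have := hFmono (left_mem_Icc.mpr hc1.le) ⟨h1.le, h2⟩ h1.le
    rwa [hF1] at this
  -- A/B < t ≤ s
  rcases le_or_gt 0 (F' t) with h3 | h3
  · -- F monotone on [A/B, t]
    have hmono2 : MonotoneOn F (Icc (A/B) t) := by
      apply monotoneOn_of_deriv_nonneg (convex_Icc (A/B) t)
      · exact fun x hx => ((hFd x (lt_of_lt_of_le hc0 hx.1)).continuousAt).continuousWithinAt
      · intro x hx
        rw [interior_Icc] at hx
        exact ((hFd x (lt_of_lt_of_le hc0 hx.1.le)).differentiableAt).differentiableWithinAt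
      · intro x hx
        rw [interior_Icc] at hx
        rw [hFderiv x (lt_of_lt_of_le hc0 hx.1.le)]
        have := hF'anti ⟨hx.1.le, (hx.2.le.trans hts)⟩ ⟨h2.le, hts⟩ hx.2.le
        linarith
    have := hmono2 (left_mem_Icc.mpr h2.le) (right_mem_Icc.mpr h2.le) h2.le
    exact hFc.trans this
  · -- F antitone on [t, s]
    have hanti2 : AntitoneOn F (Icc t s) := by
      apply antitoneOn_of_deriv_nonpos (convex_Icc t s)
      · exact fun x hx => ((hFd x (lt_of_lt_of_le ht0 hx.1)).continuousAt).continuousWithinAt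
      · intro x hx
        rw [interior_Icc] at hx
        exact ((hFd x (lt_of_lt_of_le ht0 hx.1.le)).differentiableAt).differentiableWithinAt
      · intro x hx
        rw [interior_Icc] at hx
        rw [hFderiv x (lt_of_lt_of_le ht0 hx.1.le)]
        have := hF'anti ⟨h2.le, hts⟩ ⟨h2.le.trans hx.1.le, hx.2.le⟩ hx.1.le
        linarith
    have := hanti2 (left_mem_Icc.mpr hts) (right_mem_Icc.mpr hts) hts
    have hFs' : F s = 0 := hFs
    rw [hFs'] at this
    exact this

private lemma RB_core {s : ℝ} (hs : 1 < s) {t : ℝ} (ht : 0 < t) (hts : t ≤ s) :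
    (t*Real.log t + 1 - t) * (s - 1 - Real.log s)
      ≤ (s*Real.log s + 1 - s) * (t - 1 - Real.log t) := by
  have hs0 : (0:ℝ) < s := lt_trans one_pos hs
  have hB : 0 < s - 1 - Real.log s := RB_lt_sub_one hs0 hs.ne'
  have hA : 0 < s*Real.log s + 1 - s := by
    have := RB_one_sub_inv_lt hs0 hs.ne'
    have h2 : s * (1 - 1/s) < s * Real.log s := by
      apply mul_lt_mul_of_pos_left this hs0
    have h3 : s * (1 - 1/s) = s - 1 := by field_simp
    linarith
  have hBA : s - 1 - Real.log s < s*Real.log s + 1 - s := by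
    have := RB_phi hs
    nlinarith
  have hAs : s*Real.log s + 1 - s < s * (s - 1 - Real.log s) := by
    have := RB_psi hs
    nlinarith
  have := RB_aux hA hB hBA hAs hs (by ring) t ht hts
  linarith

private lemma RB_main {t s : ℝ} (ht : 0 < t) (hts : t ≤ s) :
    (t*Real.log t + 1 - t) * (s - 1 - Real.log s)
      ≤ (s*Real.log s + 1 - s) * (t - 1 - Real.log t) := by
  have hs0 : (0:ℝ) < s := lt_of_lt_of_le ht hts
  rcases lt_or_ge 1 s with hs | hs
  · exact RB_core hs ht hts
  rcases lt_or_ge t 1 with ht1 | ht1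
  · -- use inversion: 1 < 1/t
    have hit : (1:ℝ) < 1/t := by rw [lt_div_iff₀ ht]; linarith
    have his0 : (0:ℝ) < 1/s := by positivity
    have hinv : (1:ℝ)/s ≤ 1/t := by
      apply one_div_le_one_div_of_le ht hts
    have h := RB_core hit his0 hinv
    have hRt : (1/t)*Real.log (1/t) + 1 - 1/t = (t - 1 - Real.log t)/t := by
      rw [one_div, Real.log_inv]
      field_simp
      ring
    have hSt : (1/t) - 1 - Real.log (1/t) = (t*Real.log t + 1 - t)/t := by
      rw [one_div, Real.log_inv]
      field_simp
      ring
    have hRs : (1/s)*Real.log (1/s) + 1 - 1/s = (s - 1 - Real.log s)/s := by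
      rw [one_div, Real.log_inv]
      field_simp
      ring
    have hSs : (1/s) - 1 - Real.log (1/s) = (s*Real.log s + 1 - s)/s := by
      rw [one_div, Real.log_inv]
      field_simp
      ring
    rw [hRt, hSt, hRs, hSs] at h
    rw [div_mul_div_comm, div_mul_div_comm, div_le_div_iff₀ (by positivity) (by positivity)] at h
    rw [mul_comm s t] at h
    have h2 := le_of_mul_le_mul_right h (by positivity : (0:ℝ) < t*s)
    linarith [h2]
  · -- t = s = 1
    have h1 : t = 1 := le_antisymm (hts.trans hs) ht1
    have h2 : s = 1 := le_antisymm hs (h1 ▸ hts)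
    simp [h1, h2]

open MeasureTheory

theorem relEntropy_ratio_bounds {α : Type*} [MeasurableSpace α] (P Q : Measure α)
    [IsProbabilityMeasure P] [IsProbabilityMeasure Q]
    (hPQ : P ≪ Q) (hQP : Q ≪ P) (hne : P ≠ Q)
    (hM : 1 < essSup (P.rnDeriv Q) Q) (hM' : essSup (P.rnDeriv Q) Q ≠ ⊤)
    (hm0 : 0 < essInf (P.rnDeriv Q) Q) (hm1 : essInf (P.rnDeriv Q) Q < 1)
    (κ : ℝ → ℝ)
    (hκ : ∀ t, κ t = (t * Real.log t + 1 - t) / ((t - 1) - Real.log t)) :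
    κ ((essInf (P.rnDeriv Q) Q).toReal)
        ≤ (∫ x, Real.log ((P.rnDeriv Q x).toReal) ∂P)
            / (∫ x, Real.log ((Q.rnDeriv P x).toReal) ∂Q)
      ∧ (∫ x, Real.log ((P.rnDeriv Q x).toReal) ∂P)
            / (∫ x, Real.log ((Q.rnDeriv P x).toReal) ∂Q)
        ≤ κ ((essSup (P.rnDeriv Q) Q).toReal) := by
  have hQne : (Q : Measure α) ≠ 0 := IsProbabilityMeasure.ne_zero Q
  set g := P.rnDeriv Q with hg
  set m : ℝ := (essInf g Q).toReal with hmdef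
  set M : ℝ := (essSup g Q).toReal with hMdef
  set f : α → ℝ := fun x => (g x).toReal with hfdef
  have hminf_ne_top : essInf g Q ≠ ⊤ := (hm1.trans ENNReal.one_lt_top).ne
  have hm_pos : 0 < m := ENNReal.toReal_pos hm0.ne' hminf_ne_top
  have hm_lt1 : m < 1 := by
    have := (ENNReal.toReal_lt_toReal hminf_ne_top ENNReal.one_ne_top).mpr hm1
    simpa using this
  have hM1 : 1 < M := by
    have := (ENNReal.toReal_lt_toReal ENNReal.one_ne_top hM').mpr hM
    simpa using this
  have hf_meas : Measurable f := (Measure.measurable_rnDeriv P Q).ennreal_toReal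
  have hlog_meas : Measurable fun x => Real.log (f x) := Real.measurable_log.comp hf_meas
  -- a.e. bounds
  have hub : ∀ᵐ x ∂Q, f x ≤ M := by
    filter_upwards [ENNReal.ae_le_essSup g (μ := Q)] with x hx
    exact (ENNReal.toReal_le_toReal (ne_top_of_le_ne_top hM' hx) hM').mpr hx
  have hlb : ∀ᵐ x ∂Q, m ≤ f x := by
    have hbdd : Filter.IsBoundedUnder (· ≥ ·) (MeasureTheory.ae Q) g :=
      Filter.isBoundedUnder_of ⟨0, fun x => zero_le⟩
    filter_upwards [ae_essInf_le hbdd, Measure.rnDeriv_lt_top P Q] with x h1 h2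
    exact (ENNReal.toReal_le_toReal hminf_ne_top h2.ne).mpr h1
  have hfpos : ∀ᵐ x ∂Q, 0 < f x := by
    filter_upwards [hlb] with x hx using lt_of_lt_of_le hm_pos hx
  -- integrability
  set C : ℝ := |Real.log m| + |Real.log M| with hCdef
  have hlog_bound : ∀ᵐ x ∂Q, ‖Real.log (f x)‖ ≤ C := by
    filter_upwards [hub, hlb, hfpos] with x h1 h2 h3
    rw [Real.norm_eq_abs, abs_le]
    constructor
    · have hl := Real.log_le_log hm_pos h2
      have h5 := neg_abs_le (Real.log m)
      have h6 := abs_nonneg (Real.log M)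
      linarith
    · have hl := Real.log_le_log h3 h1
      have h5 := le_abs_self (Real.log M)
      have h6 := abs_nonneg (Real.log m)
      linarith
  have hInt_log : Integrable (fun x => Real.log (f x)) Q :=
    ⟨hlog_meas.aestronglyMeasurable, HasFiniteIntegral.of_bounded hlog_bound⟩
  have hInt_f : Integrable f Q := Measure.integrable_toReal_rnDeriv
  have hInt_flog : Integrable (fun x => f x * Real.log (f x)) Q := by
    refine ⟨(hf_meas.mul hlog_meas).aestronglyMeasurable,
      HasFiniteIntegral.of_bounded (C := M * C) ?_⟩
    filter_upwards [hub, hlb, hlog_bound] with x h1 h2 h3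
    rw [Real.norm_eq_abs, abs_mul]
    have h4 : |f x| ≤ M := by
      rw [abs_of_nonneg (hm_pos.le.trans h2)]; exact h1
    calc |f x| * |Real.log (f x)| ≤ M * |Real.log (f x)| :=
          mul_le_mul_of_nonneg_right h4 (abs_nonneg _)
      _ ≤ M * C := by
          apply mul_le_mul_of_nonneg_left _ (by linarith : (0:ℝ) ≤ M)
          rw [Real.norm_eq_abs] at h3; exact h3
  set Rf : α → ℝ := fun x => f x * Real.log (f x) + 1 - f x with hRfdef
  set Sf : α → ℝ := fun x => f x - 1 - Real.log (f x) with hSfdef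
  have hInt_fl1 : Integrable (fun x => f x * Real.log (f x) + 1) Q :=
    hInt_flog.add (integrable_const 1)
  have hInt_f1 : Integrable (fun x => f x - 1) Q := hInt_f.sub (integrable_const 1)
  have hInt_Rf : Integrable Rf Q := hInt_fl1.sub hInt_f
  have hInt_Sf : Integrable Sf Q := hInt_f1.sub hInt_log
  have hint1 : ∫ x, f x ∂Q = 1 := by
    rw [hfdef, hg, Measure.integral_toReal_rnDeriv hPQ]
    simp
  -- identification of the two integrals
  have hIA : ∫ x, Real.log ((g x).toReal) ∂P = ∫ x, Rf x ∂Q := by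
    have hsm := integral_rnDeriv_smul (μ := P) (ν := Q) hPQ
      (f := fun x => Real.log (f x))
    simp only [smul_eq_mul] at hsm
    have h1 : ∫ x, Rf x ∂Q
        = ∫ x, (f x * Real.log (f x) + 1) ∂Q - ∫ x, f x ∂Q :=
      integral_sub hInt_fl1 hInt_f
    have h2 : ∫ x, (f x * Real.log (f x) + 1) ∂Q
        = ∫ x, f x * Real.log (f x) ∂Q + ∫ x, (1:ℝ) ∂Q :=
      integral_add hInt_flog (integrable_const 1)
    rw [h1, h2, hint1, integral_const]
    simp only [measure_univ, ENNReal.toReal_one, probReal_univ, smul_eq_mul, one_mul, mul_one]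
    rw [← hsm]
    simp only [hfdef, hg]
    ring
  have hIB : ∫ x, Real.log ((Q.rnDeriv P x).toReal) ∂Q = ∫ x, Sf x ∂Q := by
    have hinv : (P.rnDeriv Q)⁻¹ =ᵐ[Q] Q.rnDeriv P := hQP.ae_le (Measure.inv_rnDeriv hPQ)
    have hcongr : (fun x => Real.log ((Q.rnDeriv P x).toReal))
        =ᵐ[Q] fun x => - Real.log (f x) := by
      filter_upwards [hinv] with x hx
      rw [← hx, Pi.inv_apply, ENNReal.toReal_inv, Real.log_inv]
    have h1 : ∫ x, Sf x ∂Q = ∫ x, (f x - 1) ∂Q - ∫ x, Real.log (f x) ∂Q :=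
      integral_sub hInt_f1 hInt_log
    have h2 : ∫ x, (f x - 1) ∂Q = ∫ x, f x ∂Q - ∫ x, (1:ℝ) ∂Q :=
      integral_sub hInt_f (integrable_const 1)
    rw [integral_congr_ae hcongr, integral_neg, h1, h2, hint1, integral_const]
    simp
  -- integrated pointwise bounds
  have hup : (∫ x, Rf x ∂Q) * (M - 1 - Real.log M)
      ≤ (M * Real.log M + 1 - M) * ∫ x, Sf x ∂Q := by
    have hptwise : ∀ᵐ x ∂Q, Rf x * (M - 1 - Real.log M)
        ≤ (M * Real.log M + 1 - M) * Sf x := by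
      filter_upwards [hfpos, hub] with x h1 h2
      exact RB_main h1 h2
    have := integral_mono_ae (hInt_Rf.mul_const _) (hInt_Sf.const_mul _) hptwise
    rwa [integral_mul_const, integral_const_mul] at this
  have hlo : (m * Real.log m + 1 - m) * (∫ x, Sf x ∂Q)
      ≤ (∫ x, Rf x ∂Q) * (m - 1 - Real.log m) := by
    have hptwise : ∀ᵐ x ∂Q, (m * Real.log m + 1 - m) * Sf x
        ≤ Rf x * (m - 1 - Real.log m) := by
      filter_upwards [hlb] with x h1
      exact RB_main hm_pos h1
    have := integral_mono_ae (hInt_Sf.const_mul _) (hInt_Rf.mul_const _) hptwise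
    rwa [integral_mul_const, integral_const_mul] at this
  -- positivity of the denominator
  have hSf_nonneg : 0 ≤ᵐ[Q] Sf := by
    filter_upwards [hfpos] with x hx
    have := Real.log_le_sub_one_of_pos hx
    show (0:ℝ) ≤ f x - 1 - Real.log (f x)
    linarith
  have hIB_nonneg : 0 ≤ ∫ x, Sf x ∂Q := integral_nonneg_of_ae hSf_nonneg
  have hIBpos : 0 < ∫ x, Sf x ∂Q := by
    rcases hIB_nonneg.lt_or_eq with h | h
    · exact h
    exfalso
    have hzero : Sf =ᵐ[Q] 0 := (integral_eq_zero_iff_of_nonneg_ae hSf_nonneg hInt_Sf).mp h.symm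
    have hone : g =ᵐ[Q] (fun _ => (1:ENNReal)) := by
      filter_upwards [hzero, hfpos] with x h1 h2
      have h1' : f x - 1 - Real.log (f x) = 0 := h1
      have hf1 : f x = 1 := by
        by_contra hne1
        have := Real.log_lt_sub_one_of_pos h2 hne1
        linarith
      have : (g x).toReal = 1 := hf1
      exact (ENNReal.toReal_eq_one_iff _).mp this
    have hcontr : essInf g Q = 1 := by
      rw [essInf_congr_ae hone, essInf_const _ hQne]
    rw [hcontr] at hm1
    exact lt_irrefl _ hm1
  have hSm : 0 < m - 1 - Real.log m := RB_lt_sub_one hm_pos hm_lt1.ne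
  have hSM : 0 < M - 1 - Real.log M := RB_lt_sub_one (lt_trans one_pos hM1) hM1.ne'
  rw [hIA, hIB]
  constructor
  · rw [hκ m, div_le_div_iff₀ hSm hIBpos]
    exact hlo
  · rw [hκ M, div_le_div_iff₀ hIBpos hSM]
    exact hup
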